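/- If M is a strong k-chromatic-choosable graph, then χ_ℓ(M □ K_{1,s}) = k if s < P_ℓ(M, k), and χ_ℓ(M □ K_{1,s}) = k + 1 if s ≥ P_ℓ(M, k). -/

import Mathlib

open SimpleGraph Finset

section ListColoringDefs

variable {V : Type*}

/-- `f` is a proper coloring of `G` choosing each color from the list `L v`. -/
def IsProperListColoring (G : SimpleGraph V) (L : V → Finset ℕ) (f : V → ℕ) : Prop :=
  (∀ v, f v ∈ L v) ∧ ∀ u v, G.Adj u v → f u ≠ f v

/-- `G` admits a proper coloring from the list assignment `L`. -/
def ListColorable (G : SimpleGraph V) (L : V → Finset ℕ) : Prop :=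
  ∃ f, IsProperListColoring G L f

/-- `G` is colorable from every list assignment with lists of size at least `m`. -/
def Choosable (G : SimpleGraph V) (m : ℕ) : Prop :=
  ∀ L : V → Finset ℕ, (∀ v, m ≤ (L v).card) → ListColorable G L

/-- The list chromatic number of `G`. -/
noncomputable def listChromaticNumber (G : SimpleGraph V) : ℕ :=
  sInf { m | Choosable G m }

/-- `G` is strong `k`-chromatic-choosable: `χ(G) = k` and every `(k-1)`-assignment
from which `G` is not colorable is constant. -/
def StrongCC (G : SimpleGraph V) (k : ℕ) : Prop :=
  G.chromaticNumber = (k : ℕ∞) ∧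
    ∀ L : V → Finset ℕ, (∀ v, (L v).card = k - 1) → ¬ ListColorable G L →
      ∀ u v : V, L u = L v

/-- The number of proper `L`-colorings of `G`. -/
noncomputable def numColorings (G : SimpleGraph V) (L : V → Finset ℕ) : ℕ :=
  Set.ncard { f : V → ℕ | IsProperListColoring G L f }

/-- The list color function `P_ℓ(G,k)`: the minimum number of proper `L`-colorings
over all `k`-assignments `L`. -/
noncomputable def listColorFunction (G : SimpleGraph V) (k : ℕ) : ℕ :=
  sInf { n | ∃ L : V → Finset ℕ, (∀ v, (L v).card = k) ∧ n = numColorings G L }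

/-- The chromatic polynomial `P(G,k)`: the number of proper colorings with colors
from `{0, …, k-1}`. -/
noncomputable def chromPoly (G : SimpleGraph V) (k : ℕ) : ℕ :=
  numColorings G (fun _ => Finset.range k)

/-- The join `G ∨ K_p` of `G` with the complete graph on `p` vertices. -/
def joinK (G : SimpleGraph V) (p : ℕ) : SimpleGraph (V ⊕ Fin p) :=
  SimpleGraph.fromRel (fun a b =>
    match a, b with
    | Sum.inl u, Sum.inl v => G.Adj u v
    | _, _ => True)

/-- The star `K_{1,s}`: center `none` adjacent to the `s` leaves. -/
def starGraph (s : ℕ) : SimpleGraph (Option (Fin s)) :=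
  SimpleGraph.fromRel (fun a _ => a = none)

/-- The cycle graph `C_n` on `Fin n` (for `n ≥ 3`). -/
def cycGraph (n : ℕ) : SimpleGraph (Fin n) :=
  SimpleGraph.fromRel (fun a b => b.val = (a.val + 1) % n)

end ListColoringDefs

section MyAux
variable {V : Type*}

lemma starGraph_adj {s : ℕ} {a b : Option (Fin s)} :
    (_root_.starGraph s).Adj a b ↔ a ≠ b ∧ (a = none ∨ b = none) := by
  simp [_root_.starGraph, SimpleGraph.fromRel_adj]

lemma colorable_of_fun {G : SimpleGraph V} {n : ℕ} {C : Finset ℕ} (hC : C.card ≤ n)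
    (f : V → ℕ) (hmem : ∀ v, f v ∈ C) (hp : ∀ u v, G.Adj u v → f u ≠ f v) :
    G.Colorable n := by
  classical
  let e : ↥C ≃ Fin C.card := Fintype.equivFinOfCardEq (Fintype.card_coe C)
  refine ⟨SimpleGraph.Coloring.mk (fun v => Fin.castLE hC (e ⟨f v, hmem v⟩)) ?_⟩
  intro u v huv h
  apply hp u v huv
  exact congrArg Subtype.val (e.injective (Fin.castLE_injective hC h))

lemma exists_fun_of_colorable {G : SimpleGraph V} {n : ℕ} (h : G.Colorable n)
    {A : Finset ℕ} (hA : n ≤ A.card) :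
    ∃ f : V → ℕ, (∀ v, f v ∈ A) ∧ ∀ u v, G.Adj u v → f u ≠ f v := by
  classical
  obtain ⟨C⟩ := h
  let e : Fin A.card ≃ ↥A := (Fintype.equivFinOfCardEq (Fintype.card_coe A)).symm
  refine ⟨fun v => (e (Fin.castLE hA (C v)) : ℕ), fun v => (e _).2, ?_⟩
  intro u v huv hh
  exact C.valid huv (Fin.castLE_injective hA (e.injective (Subtype.ext hh)))

lemma exists_adj_of_two_le {G : SimpleGraph V} {k : ℕ} (hk : 2 ≤ k)
    (hchi : G.chromaticNumber = (k : ℕ∞)) : ∃ u v, G.Adj u v := by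
  by_contra h
  push_neg at h
  have hc : G.Colorable 1 :=
    ⟨SimpleGraph.Coloring.mk (fun _ => 0) (fun {u v} huv => absurd huv (h u v))⟩
  have h1 := hc.chromaticNumber_le
  rw [hchi] at h1
  have h2 : k ≤ 1 := by exact_mod_cast h1
  omega

lemma not_colorable_pred {G : SimpleGraph V} {k : ℕ} (hk : 2 ≤ k)
    (hchi : G.chromaticNumber = (k : ℕ∞)) : ¬ G.Colorable (k - 1) := by
  intro h
  have h1 := h.chromaticNumber_le
  rw [hchi] at h1
  have h2 : k ≤ k - 1 := by exact_mod_cast h1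
  omega

lemma colorable_of_strongCC {G : SimpleGraph V} {k : ℕ} (hM : StrongCC G k) :
    G.Colorable k :=
  SimpleGraph.chromaticNumber_le_iff_colorable.mp (le_of_eq hM.1)

lemma forced {G : SimpleGraph V} {k : ℕ} (hk : 2 ≤ k) (hM : StrongCC G k)
    (L : V → Finset ℕ) (hL : ∀ v, k - 1 ≤ (L v).card) (hnc : ¬ ListColorable G L) :
    ∃ A : Finset ℕ, A.card = k - 1 ∧ ∀ v, L v = A := by
  classical
  obtain ⟨u₀, v₀, hedge⟩ := exists_adj_of_two_le hk hM.1
  have hne : u₀ ≠ v₀ := hedge.ne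
  have key : ∀ t : V → Finset ℕ, (∀ v, t v ⊆ L v) → ¬ ListColorable G t := by
    intro t ht hcol
    obtain ⟨f, hf1, hf2⟩ := hcol
    exact hnc ⟨f, fun v => ht v (hf1 v), hf2⟩
  have htrim : ∀ v : V, ∃ S ⊆ L v, S.card = k - 1 :=
    fun v => (L v).exists_subset_card_eq (hL v)
  choose t0 ht0sub ht0card using htrim
  have hconst : ∀ t : V → Finset ℕ, (∀ v, t v ⊆ L v) → (∀ v, (t v).card = k - 1) →
      ∀ u v, t u = t v := fun t h1 h2 => hM.2 t h2 (key t h1)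
  have hcard : ∀ v, (L v).card = k - 1 := by
    intro v
    by_contra hc
    have hv : k ≤ (L v).card := by have := hL v; omega
    obtain ⟨S, hS, hScard⟩ := (L v).exists_subset_card_eq hv
    have hS0 : S.Nonempty := by rw [← card_pos, hScard]; omega
    obtain ⟨x, hx⟩ := hS0
    have h1 : (S.erase x).card = k - 1 := by rw [card_erase_of_mem hx, hScard]
    have hS1 : (S.erase x).Nonempty := by rw [← card_pos, h1]; omega
    obtain ⟨y, hy⟩ := hS1
    have hxy : x ≠ y := fun h => (mem_erase.1 hy).1 h.symm
    have h2 : (S.erase y).card = k - 1 := by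
      rw [card_erase_of_mem (mem_of_mem_erase hy), hScard]
    obtain ⟨u, hu⟩ : ∃ u, u ≠ v := by
      rcases eq_or_ne u₀ v with rfl | h
      · exact ⟨v₀, fun h => hne h.symm⟩
      · exact ⟨u₀, h⟩
    have gen : ∀ S' ⊆ S, S'.card = k - 1 → S' = t0 u := by
      intro S' hsub hcards
      have hh1 : ∀ w, Function.update t0 v S' w ⊆ L w := by
        intro w
        rcases eq_or_ne w v with rfl | hw
        · rw [Function.update_self]; exact hsub.trans hS
        · rw [Function.update_of_ne hw]; exact ht0sub w
      have hh2 : ∀ w, (Function.update t0 v S' w).card = k - 1 := by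
        intro w
        rcases eq_or_ne w v with rfl | hw
        · rw [Function.update_self]; exact hcards
        · rw [Function.update_of_ne hw]; exact ht0card w
      have := hconst _ hh1 hh2 v u
      rwa [Function.update_self, Function.update_of_ne hu] at this
    have e1 := gen (S.erase x) (erase_subset _ _) h1
    have e2 := gen (S.erase y) (erase_subset _ _) h2
    rw [← e2] at e1
    have hmem : x ∈ S.erase y := mem_erase.2 ⟨hxy, hx⟩
    rw [← e1] at hmem
    exact (mem_erase.1 hmem).1 rfl
  have hcc := hM.2 L hcard hnc
  exact ⟨L u₀, hcard u₀, fun v => hcc v u₀⟩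

lemma choosable_of_strongCC' {G : SimpleGraph V} {k : ℕ} (hk : 2 ≤ k)
    (hM : StrongCC G k) : Choosable G k := by
  intro L hL
  by_contra hnc
  obtain ⟨A, hA, hall⟩ := forced hk hM L (fun v => by have := hL v; omega) hnc
  obtain ⟨u₀, -, -⟩ := exists_adj_of_two_le hk hM.1
  have h1 := hL u₀
  rw [hall u₀, hA] at h1
  omega

lemma bad_unique {G : SimpleGraph V} {k : ℕ} (hk : 2 ≤ k) (hM : StrongCC G k)
    {Li : V → Finset ℕ} (hLi : ∀ v, (Li v).card = k)
    {f g : V → ℕ}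
    (hg : ∀ u v, G.Adj u v → g u ≠ g v)
    (hbf : ¬ ListColorable G (fun v => Li v \ {f v}))
    (hbg : ¬ ListColorable G (fun v => Li v \ {g v})) : f = g := by
  classical
  obtain ⟨u₀, v₀, hedge⟩ := exists_adj_of_two_le hk hM.1
  have cards : ∀ (h : V → ℕ) v, k - 1 ≤ (Li v \ {h v}).card := by
    intro h v
    have : (Li v).card - 1 ≤ ((Li v).erase (h v)).card := Finset.pred_card_le_card_erase
    rw [sdiff_singleton_eq_erase]
    have := hLi v
    omega
  obtain ⟨A, hAcard, hA⟩ := forced hk hM _ (cards f) hbf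
  obtain ⟨B, hBcard, hB⟩ := forced hk hM _ (cards g) hbg
  have memf : ∀ (h : V → ℕ) (C : Finset ℕ), C.card = k - 1 →
      (∀ v, Li v \ {h v} = C) → ∀ v, h v ∈ Li v ∧ Li v = insert (h v) C := by
    intro h C hCcard hC v
    have hmem : h v ∈ Li v := by
      by_contra hno
      have heq : Li v \ {h v} = Li v := by
        rw [sdiff_singleton_eq_erase, erase_eq_of_notMem hno]
      have h5 : (Li v).card = k - 1 := by rw [← heq, hC v, hCcard]
      have h6 := hLi v
      omega
    refine ⟨hmem, ?_⟩
    ext a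
    simp only [mem_insert]
    constructor
    · intro ha
      rcases eq_or_ne a (h v) with rfl | hne
      · exact Or.inl rfl
      · right; rw [← hC v]; simp [ha, hne]
    · rintro (rfl | ha)
      · exact hmem
      · rw [← hC v] at ha; exact (mem_sdiff.1 ha).1
  have hf' := memf f A hAcard hA
  have hg' := memf g B hBcard hB
  have hfA : ∀ v, f v ∉ A := by
    intro v hv
    have := hA v
    have : f v ∈ Li v \ {f v} := this ▸ hv
    simp at this
  have hgB : ∀ v, g v ∉ B := by
    intro v hv
    have := hB v
    have : g v ∈ Li v \ {g v} := this ▸ hv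
    simp at this
  rcases eq_or_ne A B with rfl | hAB
  · funext v
    have h1 : f v ∈ insert (g v) A := (hg' v).2 ▸ (hf' v).1
    rcases mem_insert.1 h1 with h | h
    · exact h
    · exact absurd h (hfA v)
  · exfalso
    have hns : ¬ A ⊆ B := by
      intro hsub
      exact hAB (Finset.eq_of_subset_of_card_le hsub (by omega))
    obtain ⟨a, haA, haB⟩ := not_subset.1 hns
    have hga : ∀ v, g v = a := by
      intro v
      have h1 : a ∈ Li v \ {f v} := (hA v).symm ▸ haA
      have h2 : a ∈ Li v := (mem_sdiff.1 h1).1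
      have h3 : a ∈ insert (g v) B := (hg' v).2 ▸ h2
      rcases mem_insert.1 h3 with h | h
      · exact h.symm
      · exact absurd h haB
    exact hg u₀ v₀ hedge ((hga u₀).trans (hga v₀).symm)

open Classical in
noncomputable def colT [Fintype V] (G : SimpleGraph V) (L : V → Finset ℕ) :
    Finset (V → ℕ) :=
  (Fintype.piFinset L).filter fun f => ∀ u v, G.Adj u v → f u ≠ f v

lemma mem_colT [Fintype V] {G : SimpleGraph V} {L : V → Finset ℕ} {f : V → ℕ} :
    f ∈ colT G L ↔ IsProperListColoring G L f := by
  classical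
  simp [colT, Fintype.mem_piFinset, IsProperListColoring]

lemma numColorings_eq [Fintype V] (G : SimpleGraph V) (L : V → Finset ℕ) :
    numColorings G L = (colT G L).card := by
  have h : {f : V → ℕ | IsProperListColoring G L f} = ↑(colT G L) := by
    ext f; simp [mem_colT]
  rw [numColorings, h, Set.ncard_coe_finset]

/-- Assemble a coloring of the box product from a center coloring and leaf colorings. -/
lemma assemble {M : SimpleGraph V} {s : ℕ} {L : V × Option (Fin s) → Finset ℕ}
    {f : V → ℕ} {g : Fin s → V → ℕ}
    (hf1 : ∀ v, f v ∈ L (v, none)) (hf2 : ∀ u v, M.Adj u v → f u ≠ f v)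
    (hg : ∀ j, IsProperListColoring M (fun v => L (v, some j) \ {f v}) (g j)) :
    ListColorable (M.boxProd (_root_.starGraph s)) L := by
  refine ⟨fun p => p.2.elim (f p.1) (fun j => g j p.1), ?_, ?_⟩
  · rintro ⟨v, _ | j⟩
    · exact hf1 v
    · exact (mem_sdiff.1 ((hg j).1 v)).1
  · rintro ⟨u, a⟩ ⟨v, b⟩ hadj
    rw [SimpleGraph.boxProd_adj] at hadj
    rcases hadj with ⟨hMuv, hab⟩ | ⟨hstar, huv⟩
    · simp only at hab ⊢
      subst hab
      cases a with
      | none => exact hf2 u v hMuv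
      | some j => exact (hg j).2 u v hMuv
    · simp only at hstar huv ⊢
      subst huv
      rw [_root_.starGraph_adj] at hstar
      obtain ⟨hne, h0⟩ := hstar
      match a, b with
      | none, none => exact absurd rfl hne
      | none, some j =>
          have h9 := (mem_sdiff.1 ((hg j).1 u)).2
          simp only [mem_singleton] at h9
          exact fun h => h9 h.symm
      | some j, none =>
          have h9 := (mem_sdiff.1 ((hg j).1 u)).2
          simp only [mem_singleton] at h9
          exact fun h => h9 h
      | some j, some j' => rcases h0 with h | h <;> simp at h

lemma choosable_mono {W : Type*} {G : SimpleGraph W} {a b : ℕ} (hab : a ≤ b)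
    (h : Choosable G a) : Choosable G b :=
  fun L hL => h L (fun v => le_trans hab (hL v))

lemma listChrom_eq {W : Type*} (G : SimpleGraph W) (n : ℕ) (h1 : Choosable G n)
    (h2 : ¬ Choosable G (n - 1)) (hn : 1 ≤ n) : listChromaticNumber G = n := by
  apply le_antisymm (Nat.sInf_le (show n ∈ { m | Choosable G m } from h1))
  by_contra hlt
  push_neg at hlt
  have hmem := Nat.sInf_mem (⟨n, h1⟩ : Set.Nonempty { m | Choosable G m })
  exact h2 (choosable_mono (by omega) hmem)

/-- Case `s < P_ℓ(M,k)`: the box product is `k`-choosable. -/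
lemma choosable_box [Fintype V] {M : SimpleGraph V} {k s : ℕ} (hk : 2 ≤ k)
    (hM : StrongCC M k) (hs : s < listColorFunction M k) :
    Choosable (M.boxProd (_root_.starGraph s)) k := by
  classical
  intro L hL
  have htc : ∀ v : V, ∃ S ⊆ L (v, none), S.card = k :=
    fun v => (L (v, none)).exists_subset_card_eq (hL _)
  choose Lc hLcsub hLccard using htc
  have hti : ∀ (j : Fin s) (v : V), ∃ S ⊆ L (v, some j), S.card = k :=
    fun j v => (L (v, some j)).exists_subset_card_eq (hL _)
  choose Li hLisub hLicard using hti
  set T := colT M Lc with hT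
  have hTcard : listColorFunction M k ≤ T.card := by
    have : numColorings M Lc ∈
        { n | ∃ L' : V → Finset ℕ, (∀ v, (L' v).card = k) ∧ n = numColorings M L' } :=
      ⟨Lc, hLccard, rfl⟩
    have h1 := Nat.sInf_le this
    rwa [numColorings_eq] at h1
  have hgoodex : ∃ f ∈ T, ∀ j : Fin s, ListColorable M (fun v => Li j v \ {f v}) := by
    by_contra hcon
    push_neg at hcon
    have hT0 : T.Nonempty := by rw [← card_pos]; omega
    obtain ⟨f₀, hf₀⟩ := hT0
    obtain ⟨j₀, -⟩ := hcon f₀ hf₀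
    set φ : (V → ℕ) → Fin s := fun f =>
      if h : ∃ j : Fin s, ¬ ListColorable M (fun v => Li j v \ {f v}) then h.choose
      else j₀ with hφ
    have hbad : ∀ f ∈ T, ¬ ListColorable M (fun v => Li (φ f) v \ {f v}) := by
      intro f hf
      obtain ⟨j, hj⟩ := hcon f hf
      have hex : ∃ j : Fin s, ¬ ListColorable M (fun v => Li j v \ {f v}) := ⟨j, hj⟩
      simp only [hφ]
      rw [dif_pos hex]
      exact hex.choose_spec
    have hinj : Set.InjOn φ T := by
      intro f hf g hg hfg
      have h1 := hbad f hf
      have h2 := hbad g hg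
      rw [hfg] at h1
      exact bad_unique hk hM (hLicard (φ g)) ((mem_colT.1 hg).2) h1 h2
    have hle := Finset.card_le_card_of_injOn φ (fun a _ => Finset.mem_univ (φ a)) hinj
    rw [Finset.card_univ, Fintype.card_fin] at hle
    omega
  obtain ⟨f, hfT, hgood⟩ := hgoodex
  have hfP := mem_colT.1 hfT
  choose g hg using hgood
  refine assemble (g := g) (fun v => hLcsub v (hfP.1 v)) hfP.2 ?_
  intro j
  refine ⟨fun v => ?_, (hg j).2⟩
  have h1 := (hg j).1 v
  rw [mem_sdiff] at h1 ⊢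
  exact ⟨hLisub j v h1.1, h1.2⟩

/-- The box product is never `(k-1)`-choosable. -/
lemma not_choosable_low [Fintype V] {M : SimpleGraph V} {k s : ℕ} (hk : 2 ≤ k)
    (hM : StrongCC M k) : ¬ Choosable (M.boxProd (_root_.starGraph s)) (k - 1) := by
  intro h
  obtain ⟨F, hF1, hF2⟩ := h (fun _ => range (k - 1))
    (fun _ => (card_range _).ge)
  have hcol : M.Colorable (k - 1) :=
    colorable_of_fun (card_range (k - 1)).le (fun v => F (v, none))
      (fun v => hF1 (v, none))
      (fun u v huv => hF2 (u, none) (v, none)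
        (by rw [SimpleGraph.boxProd_adj]; exact Or.inl ⟨huv, rfl⟩))
  exact not_colorable_pred hk hM.1 hcol

/-- Case `P_ℓ(M,k) ≤ s`: the box product is not `k`-choosable. -/
lemma not_choosable_high [Fintype V] {M : SimpleGraph V} {k s : ℕ} (hk : 2 ≤ k)
    (hM : StrongCC M k) (hs : listColorFunction M k ≤ s) :
    ¬ Choosable (M.boxProd (_root_.starGraph s)) k := by
  classical
  have hne : { n | ∃ L : V → Finset ℕ, (∀ v, (L v).card = k) ∧ n = numColorings M L }.Nonempty :=
    ⟨numColorings M (fun _ => range k), ⟨fun _ => range k, fun _ => card_range k, rfl⟩⟩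
  obtain ⟨Ls, hLscard, hP⟩ := Nat.sInf_mem hne
  have hP' : listColorFunction M k = numColorings M Ls := hP
  clear hP hne
  set T := colT M Ls with hTdef
  have hTcard : T.card = listColorFunction M k := by
    rw [hP', numColorings_eq, hTdef]
  obtain ⟨N, hNpos, hfresh⟩ : ∃ N : ℕ, 0 < N ∧ ∀ v, ∀ a ∈ Ls v, a < N := by
    refine ⟨Finset.univ.sup (fun v => (Ls v).sup id) + 1, Nat.succ_pos _, fun v a ha => ?_⟩
    have h1 : a ≤ (Ls v).sup id := Finset.le_sup (f := id) ha
    have h2 : (Ls v).sup id ≤ Finset.univ.sup (fun v => (Ls v).sup id) :=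
      Finset.le_sup (f := fun v => (Ls v).sup id) (mem_univ v)
    omega
  obtain ⟨B, hBcard, hBge⟩ :
      ∃ B : Finset ℕ, B.card = k - 1 ∧ ∀ b ∈ B, N ≤ b := by
    refine ⟨(range (k - 1)).image (· + N), ?_, ?_⟩
    · rw [card_image_of_injective _ (add_left_injective N), card_range]
    · intro b hb
      rw [mem_image] at hb
      obtain ⟨t, -, rfl⟩ := hb
      omega
  have hc : T.card ≤ s := by omega
  let e : ↥T ≃ Fin T.card := Fintype.equivFinOfCardEq (Fintype.card_coe T)
  let ι : ↥T → Fin s := fun f => Fin.castLE hc (e f)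
  let ρ : Fin s → Option ↥T := fun j =>
    if h : (j : ℕ) < T.card then some (e.symm ⟨j, h⟩) else none
  have hρι : ∀ f : ↥T, ρ (ι f) = some f := by
    intro f
    have hlt : ((ι f : Fin s) : ℕ) < T.card := (e f).isLt
    simp only [ρ, dif_pos hlt]
    congr 1
    have : (⟨((ι f : Fin s) : ℕ), hlt⟩ : Fin T.card) = e f := Fin.ext rfl
    rw [this, e.symm_apply_apply]
  set LL : V × Option (Fin s) → Finset ℕ := fun p =>
    match p.2 with
    | none => Ls p.1
    | some j =>
      match ρ j with
      | some f => insert ((f : V → ℕ) p.1) B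
      | none => insert 0 B
    with hLL
  have hLLcard : ∀ p, k ≤ (LL p).card := by
    rintro ⟨v, _ | j⟩
    · exact (hLscard v).ge
    · show k ≤ (match ρ j with
        | some f => insert ((f : V → ℕ) v) B
        | none => insert 0 B).card
      cases hρ : ρ j with
      | some f =>
        have hmem : (f : V → ℕ) v ∈ Ls v := (mem_colT.1 f.2).1 v
        have hnB : (f : V → ℕ) v ∉ B := fun h => by
          have := hBge _ h; have := hfresh v _ hmem; omega
        rw [card_insert_of_notMem hnB, hBcard]; omega
      | none =>
        have hnB : 0 ∉ B := fun h => by have := hBge _ h; omega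
        rw [card_insert_of_notMem hnB, hBcard]; omega
  intro hchoos
  obtain ⟨F, hF1, hF2⟩ := hchoos LL hLLcard
  set f : V → ℕ := fun v => F (v, none) with hf
  have hfT : f ∈ T := by
    rw [hTdef, mem_colT]
    refine ⟨fun v => hF1 (v, none), fun u v huv => ?_⟩
    exact hF2 (u, none) (v, none) (by rw [SimpleGraph.boxProd_adj]; exact Or.inl ⟨huv, rfl⟩)
  set j : Fin s := ι ⟨f, hfT⟩ with hj
  set g : V → ℕ := fun v => F (v, some j) with hg
  have hadj : ∀ v, (M.boxProd (_root_.starGraph s)).Adj (v, none) (v, some j) := by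
    intro v
    rw [SimpleGraph.boxProd_adj]
    exact Or.inr ⟨_root_.starGraph_adj.2 ⟨by simp, Or.inl rfl⟩, rfl⟩
  have hgB : ∀ v, g v ∈ B := by
    intro v
    have h1 : g v ∈ LL (v, some j) := hF1 (v, some j)
    have hrj : ρ j = some (⟨f, hfT⟩ : ↥T) := hρι _
    have h2 : LL (v, some j) = insert (f v) B := by
      show (match ρ j with
        | some f => insert ((f : V → ℕ) v) B
        | none => insert 0 B) = insert (f v) B
      rw [hrj]
    rw [h2, mem_insert] at h1
    rcases h1 with h1 | h1
    · exact absurd h1 (hF2 (v, some j) (v, none) ((hadj v).symm))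
    · exact h1
  have hgproper : ∀ u v, M.Adj u v → g u ≠ g v := by
    intro u v huv
    exact hF2 (u, some j) (v, some j)
      (by rw [SimpleGraph.boxProd_adj]; exact Or.inl ⟨huv, rfl⟩)
  exact not_colorable_pred hk hM.1 (colorable_of_fun hBcard.le g hgB hgproper)

lemma choosable_box_succ [Fintype V] {M : SimpleGraph V} {k s : ℕ} (hk : 2 ≤ k)
    (hM : StrongCC M k) : Choosable (M.boxProd (_root_.starGraph s)) (k + 1) := by
  classical
  intro L hL
  have hch := choosable_of_strongCC' hk hM
  obtain ⟨f, hf1, hf2⟩ := hch (fun v => L (v, none))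
    (fun v => by have := hL (v, none); show k ≤ (L (v, none)).card; omega)
  have hleaf : ∀ j : Fin s, ListColorable M (fun v => L (v, some j) \ {f v}) := by
    intro j
    apply hch
    intro v
    have h1 := hL (v, some j)
    have h2 : (L (v, some j)).card - 1 ≤ ((L (v, some j)).erase (f v)).card :=
      Finset.pred_card_le_card_erase
    rw [sdiff_singleton_eq_erase]
    omega
  choose g hg using hleaf
  exact assemble (g := g) hf1 hf2 hg

end MyAux

/-- the list chromatic number of `M □ K_{1,s}` for strong
`k`-chromatic-choosable `M` transitions from `k` to `k+1` at `s = P_ℓ(M,k)`. -/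
theorem stmt_14 {V : Type*} [Fintype V] (M : SimpleGraph V) (k : ℕ) (hk : 2 ≤ k)
    (hM : StrongCC M k) (s : ℕ) :
    (s < listColorFunction M k →
      listChromaticNumber (M.boxProd (_root_.starGraph s)) = k) ∧
    (listColorFunction M k ≤ s →
      listChromaticNumber (M.boxProd (_root_.starGraph s)) = k + 1) := by
  constructor
  · intro hs
    exact listChrom_eq _ k (choosable_box hk hM hs) (not_choosable_low hk hM) (by omega)
  · intro hs
    refine listChrom_eq _ (k + 1) (choosable_box_succ hk hM) ?_ (by omega)
    rw [Nat.add_sub_cancel]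
    exact not_choosable_high hk hM hs
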